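/- The braided Ptolemy–Thompson group T* does not admit a left-invariant linear order (it is circularly orderable but, having torsion, cannot be left ordered). -/

import Mathlib

/-! The braided Ptolemy–Thompson group `T*` (presentation with generators α, β, σ),
the Ptolemy–Thompson group `T` (presentation with generators α, β), and the stable
braid group `B∞`. -/

-- Generators of T*: 0 ↦ α, 1 ↦ β, 2 ↦ σ
def TSα : FreeGroup (Fin 3) := FreeGroup.of 0
def TSβ : FreeGroup (Fin 3) := FreeGroup.of 1
def TSσ : FreeGroup (Fin 3) := FreeGroup.of 2
/-- a = α²σ⁻¹ -/
def TSa : FreeGroup (Fin 3) := TSα^2 * TSσ⁻¹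
def TSσ₁ : FreeGroup (Fin 3) := TSσ
def TSσ₂ : FreeGroup (Fin 3) := TSβ * TSσ * TSβ⁻¹
def TSσ₃ : FreeGroup (Fin 3) := TSβ⁻¹ * TSσ * TSβ

open scoped commutatorElement

/-- The fifteen defining relations of `T*`, written as relators. -/
def TstarRels : Set (FreeGroup (Fin 3)) :=
  { TSα * TSσ * (TSσ * TSα)⁻¹,                         -- (1) ασ = σα
    TSα^4 * (TSσ^2)⁻¹,                                  -- (2) α⁴ = σ²
    TSβ^3,                                              -- (3) β³ = 1
    (TSβ*TSα)^5 * (TSσ*TSβ*TSσ*TSβ⁻¹*TSσ)⁻¹,            -- (4) (βα)⁵ = σβσβ⁻¹σ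
    ⁅TSβ*TSα*TSβ, TSa*TSβ*TSα*TSβ*TSa⁆,                 -- (5)
    ⁅TSβ*TSα*TSβ, TSa*TSβ*TSa*TSβ*TSα*TSβ*TSa*TSβ*TSa⁆, -- (6)
    ⁅TSσ, TSβ*TSα*TSβ⁆,                                 -- (7)
    ⁅TSσ, TSβ*TSα*TSβ*TSa*TSβ⁻¹⁆,                       -- (8)
    ⁅TSσ, TSβ*TSa*TSβ⁻¹*TSa*TSβ*TSα*TSβ*TSa*TSβ*TSa*TSβ⁻¹⁆, -- (9)
    ⁅TSσ, TSβ*TSa*TSβ*TSa*TSβ*TSα*TSβ*TSa*TSβ*TSa*TSβ⁆, -- (10)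
    ⁅TSσ, TSβ*TSa*TSβ⁻¹*TSσ*(TSβ*TSa*TSβ⁻¹)⁻¹⁆,         -- (11)
    ⁅TSσ, TSβ*TSa*TSβ*TSa*TSβ⁻¹*TSσ*(TSβ*TSa*TSβ*TSa*TSβ⁻¹)⁻¹⁆, -- (12)
    ⁅TSσ, TSβ*TSa*TSβ*TSa*TSβ*TSσ*(TSβ*TSa*TSβ*TSa*TSβ)⁻¹⁆,     -- (13)
    (TSσ₁*TSσ₂*TSσ₁) * (TSσ₂*TSσ₁*TSσ₂)⁻¹,              -- (14)
    (TSσ₁*TSσ₂*TSσ₃*TSσ₁) * (TSσ₂*TSσ₃*TSσ₁*TSσ₂)⁻¹,    -- (15a)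
    (TSσ₂*TSσ₃*TSσ₁*TSσ₂) * (TSσ₃*TSσ₁*TSσ₂*TSσ₃)⁻¹ }   -- (15b)

/-- The braided Ptolemy–Thompson group `T*`. -/
abbrev Tstar := PresentedGroup TstarRels

/-- The homomorphism to ℤ/3 sending α ↦ 2, β ↦ 1, σ ↦ 1. -/
def Tstarf : Fin 3 → Multiplicative (ZMod 3) :=
  ![Multiplicative.ofAdd 2, Multiplicative.ofAdd 1, Multiplicative.ofAdd 1]

lemma Tstarf_kills : ∀ r ∈ TstarRels, FreeGroup.lift Tstarf r = 1 := by
  intro r hr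
  simp only [TstarRels, Set.mem_insert_iff, Set.mem_singleton_iff] at hr
  rcases hr with rfl|rfl|rfl|rfl|rfl|rfl|rfl|rfl|rfl|rfl|rfl|rfl|rfl|rfl|rfl|rfl <;>
    simp [TSα, TSβ, TSσ, TSa, TSσ₁, TSσ₂, TSσ₃, Tstarf, commutatorElement_def] <;>
    decide

/-- The induced homomorphism `T* → ℤ/3`. -/
def Tstarφ : Tstar →* Multiplicative (ZMod 3) :=
  PresentedGroup.toGroup Tstarf_kills

lemma Tstar_beta_ne_one : (PresentedGroup.mk TstarRels TSβ : Tstar) ≠ 1 := by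
  intro h
  have : Tstarφ (PresentedGroup.mk TstarRels TSβ) = 1 := by rw [h]; exact map_one _
  have h2 : Tstarφ (PresentedGroup.of (1 : Fin 3)) = Tstarf 1 :=
    PresentedGroup.toGroup.of Tstarf_kills
  rw [show (PresentedGroup.mk TstarRels TSβ : Tstar) = PresentedGroup.of 1 from rfl] at this
  rw [h2] at this
  revert this
  decide

lemma Tstar_beta_cube : (PresentedGroup.mk TstarRels TSβ : Tstar)^3 = 1 := by
  have : (PresentedGroup.mk TstarRels (TSβ^3) : Tstar) = 1 := by
    apply (QuotientGroup.eq_one_iff _).mpr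
    apply Subgroup.subset_normalClosure
    simp only [TstarRels, Set.mem_insert_iff, Set.mem_singleton_iff]
    tauto
  simpa [map_pow] using this

/-- `T*` does not admit a left-invariant linear order. -/
theorem Tstar_not_left_orderable :
    ¬ ∃ inst : LinearOrder Tstar, ∀ g a b : Tstar,
        (letI := inst
         a ≤ b → g * a ≤ g * b) := by
  rintro ⟨inst, h⟩
  letI := inst
  set b : Tstar := PresentedGroup.mk TstarRels TSβ with hb
  have hne : b ≠ 1 := Tstar_beta_ne_one
  have h3 : b^3 = 1 := Tstar_beta_cube
  have key : ∀ x : Tstar, x ≠ 1 → x^3 ≠ 1 := by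
    intro x hx hx3
    rcases le_total x 1 with hle | hle
    · have h2 : x * x ≤ x * 1 := h x x 1 hle
      rw [mul_one] at h2
      have h4 : x * (x * x) ≤ x * x := h x (x*x) x h2
      have : x^3 ≤ x^2 := by
        simpa [pow_succ, pow_two, mul_assoc] using h4
      rw [hx3] at this
      have h5 : x^2 ≤ 1 := le_trans (by simpa [pow_two] using h2) hle
      have h6 : x^2 = 1 := le_antisymm h5 this
      have : x = 1 := by
        have := hx3
        rw [pow_succ, h6, one_mul] at this
        exact this
      exact hx this
    · have h2 : x * 1 ≤ x * x := h x 1 x hle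
      rw [mul_one] at h2
      have h4 : x * x ≤ x * (x * x) := h x x (x*x) h2
      have : x^2 ≤ x^3 := by
        simpa [pow_succ, pow_two, mul_assoc] using h4
      rw [hx3] at this
      have h5 : (1:Tstar) ≤ x^2 := le_trans hle (by simpa [pow_two] using h2)
      have h6 : x^2 = 1 := le_antisymm this h5
      have : x = 1 := by
        have := hx3
        rw [pow_succ, h6, one_mul] at this
        exact this
      exact hx this
  exact key b hne h3
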